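/- Let C̲ ∈ ℂ^{n×n} be invertible, c̲ ∈ ℂ^n, and C = [c̲ | C̲] ∈ ℂ^{n×(n+1)}. Then the smallest singular value of C satisfies σ_n(C) ≥ σ_n(C̲) = 1/‖C̲^{-1}‖. Moreover, if vec(q) = q(0)·(1, -C̲^{-1}c̲)^t and vec(q̃) = ẽ·C̲^{-1}e_n are normalized to unit norm (determining q(0) and ẽ), then the Cabay–Meleshko indicator κ_CM = 1/|q(0)·ẽ| satisfies κ_CM ≤ √n·‖C̲^{-1}‖². -/

import Mathlib

noncomputable section
open Matrix Finset Polynomial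

/-- Spectral (operator `ℓ² → ℓ²`) norm of a complex matrix. -/
def specNorm {α β : Type} [Fintype α] [Fintype β] [DecidableEq α] [DecidableEq β]
    (A : Matrix α β ℂ) : ℝ :=
  ‖(Matrix.toEuclideanLin A).toContinuousLinearMap‖

/-- Moore–Penrose pseudoinverse `A† = Aᴴ (A Aᴴ)⁻¹` of a full row rank matrix. -/
def pinv {α β : Type} [Fintype α] [Fintype β] [DecidableEq α] [DecidableEq β]
    (A : Matrix α β ℂ) : Matrix β α ℂ :=
  Aᴴ * (A * Aᴴ)⁻¹

/-- Euclidean norm of a complex vector. -/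
def vnorm {k : ℕ} (v : Fin k → ℂ) : ℝ :=
  Real.sqrt (∑ i, ‖v i‖ ^ 2)

lemma vnorm_eq_norm {k : ℕ} (v : Fin k → ℂ) :
    vnorm v = ‖((WithLp.equiv 2 (Fin k → ℂ)).symm v : EuclideanSpace ℂ (Fin k))‖ := by
  rw [EuclideanSpace.norm_eq]
  simp [vnorm]

lemma vnorm_nonneg {k : ℕ} (v : Fin k → ℂ) : 0 ≤ vnorm v := Real.sqrt_nonneg _

lemma specNorm_nonneg {α β : Type} [Fintype α] [Fintype β] [DecidableEq α] [DecidableEq β]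
    (A : Matrix α β ℂ) : 0 ≤ specNorm A := norm_nonneg _

lemma sq_vnorm {k : ℕ} (v : Fin k → ℂ) :
    vnorm v ^ 2 = ∑ i, ‖v i‖ ^ 2 := by
  rw [vnorm, Real.sq_sqrt]
  positivity

lemma vnorm_mulVec_le {k l : ℕ} (A : Matrix (Fin k) (Fin l) ℂ) (v : Fin l → ℂ) :
    vnorm (A *ᵥ v) ≤ specNorm A * vnorm v := by
  rw [vnorm_eq_norm, vnorm_eq_norm]
  have h := (Matrix.toEuclideanLin A).toContinuousLinearMap.le_opNorm
    ((WithLp.equiv 2 (Fin l → ℂ)).symm v)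
  simpa [specNorm] using h

lemma inner_eq_dot {k : ℕ} (a b : Fin k → ℂ) :
    (inner ℂ ((WithLp.equiv 2 (Fin k → ℂ)).symm a : EuclideanSpace ℂ (Fin k))
      ((WithLp.equiv 2 (Fin k → ℂ)).symm b) : ℂ) = star a ⬝ᵥ b := by
  simp [PiLp.inner_apply, dotProduct, RCLike.inner_apply, mul_comm]

lemma key_cs {k : ℕ} (x x' : Fin k → ℂ) (h : star x ⬝ᵥ x' = star x ⬝ᵥ x) :
    vnorm x ≤ vnorm x' := by
  set X : EuclideanSpace ℂ (Fin k) := (WithLp.equiv 2 (Fin k → ℂ)).symm x with hX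
  set X' : EuclideanSpace ℂ (Fin k) := (WithLp.equiv 2 (Fin k → ℂ)).symm x' with hX'
  have h1 : (inner ℂ X X' : ℂ) = inner ℂ X X := by
    rw [hX, hX', inner_eq_dot, inner_eq_dot, h]
  have h2 : ‖X‖ ^ 2 = Complex.re (inner ℂ X X') := by
    rw [h1, ← inner_self_eq_norm_sq (𝕜 := ℂ) X]; rfl
  have h3 : Complex.re (inner ℂ X X') ≤ ‖(inner ℂ X X' : ℂ)‖ := Complex.re_le_norm _
  have h4 : ‖(inner ℂ X X' : ℂ)‖ ≤ ‖X‖ * ‖X'‖ := norm_inner_le_norm X X'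
  rw [vnorm_eq_norm, vnorm_eq_norm, ← hX, ← hX']
  nlinarith [norm_nonneg X, norm_nonneg X']

open scoped ComplexOrder in
lemma posDef_CC {m k : ℕ} (C : Matrix (Fin m) (Fin k) ℂ)
    (h : ∀ x : Fin m → ℂ, Cᴴ *ᵥ x = 0 → x = 0) : (C * Cᴴ).PosDef := by
  refine posDef_iff_dotProduct_mulVec.mpr ⟨Matrix.isHermitian_mul_conjTranspose_self C, fun x hx => ?_⟩
  have key : star x ⬝ᵥ ((C * Cᴴ) *ᵥ x) = star (Cᴴ *ᵥ x) ⬝ᵥ (Cᴴ *ᵥ x) := by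
    rw [star_mulVec, conjTranspose_conjTranspose, ← dotProduct_mulVec, mulVec_mulVec]
  rw [key, dotProduct_star_self_pos_iff]
  exact fun h0 => hx (h x h0)

lemma vnorm_cons_zero {k : ℕ} (w : Fin k → ℂ) : vnorm (Fin.cons 0 w) = vnorm w := by
  unfold vnorm
  rw [Fin.sum_univ_succ]
  simp

lemma vnorm_smul {k : ℕ} (a : ℂ) (v : Fin k → ℂ) :
    vnorm (a • v) = ‖a‖ * vnorm v := by
  unfold vnorm
  rw [← Real.sqrt_sq (norm_nonneg a), ← Real.sqrt_mul (by positivity), Finset.mul_sum]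
  congr 1
  refine Finset.sum_congr rfl fun i _ => ?_
  simp [mul_pow]

open scoped ComplexOrder

/-- with `C = [c̲ | C̲]`, `C̲` invertible, one has `σ(C) ≥ σ(C̲)`
(equivalently `‖C†‖ ≤ ‖C̲⁻¹‖`), and with the normalizations
`‖q(0)·(1, -C̲⁻¹c̲)ᵗ‖ = 1`, `‖ẽ·C̲⁻¹ e_n‖ = 1` and `‖C‖_F ≤ √n`, the Cabay–Meleshko
indicator satisfies `κ_CM = 1/|q(0) ẽ| ≤ √n ‖C̲⁻¹‖²`. (Here the size is `n+1`.) -/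
theorem cabay_meleshko (n : ℕ) (Cu : Matrix (Fin (n + 1)) (Fin (n + 1)) ℂ)
    (c : Fin (n + 1) → ℂ) (hCu : IsUnit Cu)
    (q0 et : ℂ)
    (hq0 : vnorm (q0 • ((Fin.cons 1 (fun i => -((Cu⁻¹ *ᵥ c) i))) : Fin (n + 2) → ℂ)) = 1)
    (het : vnorm (et • (Cu⁻¹ *ᵥ Pi.single (Fin.last n) 1)) = 1)
    (hFrob : (∑ i, ∑ k, ‖(fun i => Fin.cons (c i) (Cu i) :
        Matrix (Fin (n + 1)) (Fin (n + 2)) ℂ) i k‖ ^ 2) ≤ (n + 1 : ℝ)) :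
    specNorm (pinv (fun i => Fin.cons (c i) (Cu i) : Matrix (Fin (n + 1)) (Fin (n + 2)) ℂ)) ≤
        specNorm Cu⁻¹ ∧
      1 / ‖q0 * et‖ ≤ Real.sqrt (n + 1) * specNorm Cu⁻¹ ^ 2 := by
  classical
  set C : Matrix (Fin (n+1)) (Fin (n+2)) ℂ := (fun i => Fin.cons (c i) (Cu i)) with hC
  have hdetCu : IsUnit Cu.det := (Matrix.isUnit_iff_isUnit_det Cu).mp hCu
  have hdetCuH : IsUnit Cuᴴ.det := by
    rw [Matrix.det_conjTranspose]
    exact hdetCu.star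
  have hker : ∀ x : Fin (n+1) → ℂ, Cᴴ *ᵥ x = 0 → x = 0 := by
    intro x hx
    have h1 : Cuᴴ *ᵥ x = 0 := by
      funext j
      have h2 := congrFun hx j.succ
      simpa [hC, Matrix.conjTranspose_apply, Matrix.mulVec, dotProduct, Matrix.conjTranspose, Matrix.transpose, Matrix.map] using h2
    calc x = ((Cuᴴ)⁻¹ * Cuᴴ) *ᵥ x := by
            rw [Matrix.nonsing_inv_mul _ hdetCuH, Matrix.one_mulVec]
      _ = (Cuᴴ)⁻¹ *ᵥ (Cuᴴ *ᵥ x) := by rw [Matrix.mulVec_mulVec]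
      _ = 0 := by rw [h1, Matrix.mulVec_zero]
  have hPD : (C * Cᴴ).PosDef := posDef_CC C hker
  have hdetCC : IsUnit (C * Cᴴ).det := (Matrix.isUnit_iff_isUnit_det _).mp hPD.isUnit
  have hCpinv : C * pinv C = 1 := by
    rw [pinv, ← Matrix.mul_assoc, Matrix.mul_nonsing_inv _ hdetCC]
  have hmin : ∀ y : Fin (n+1) → ℂ, vnorm (pinv C *ᵥ y) ≤ vnorm (Cu⁻¹ *ᵥ y) := by
    intro y
    set x : Fin (n+2) → ℂ := pinv C *ᵥ y with hx
    set x' : Fin (n+2) → ℂ := Fin.cons 0 (Cu⁻¹ *ᵥ y) with hx'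
    have hCx : C *ᵥ x = y := by
      rw [hx, Matrix.mulVec_mulVec, hCpinv, Matrix.one_mulVec]
    have hCx' : C *ᵥ x' = y := by
      funext i
      have h3 : (C *ᵥ x') i = (Cu *ᵥ (Cu⁻¹ *ᵥ y)) i := by
        simp [hC, hx', Matrix.mulVec, dotProduct, Fin.sum_univ_succ]
      rw [h3, Matrix.mulVec_mulVec, Matrix.mul_nonsing_inv _ hdetCu, Matrix.one_mulVec]
    have hxu : x = Cᴴ *ᵥ ((C * Cᴴ)⁻¹ *ᵥ y) := by
      rw [hx, pinv, ← Matrix.mulVec_mulVec]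
    have hdotw : ∀ w, star x ⬝ᵥ w = star ((C * Cᴴ)⁻¹ *ᵥ y) ⬝ᵥ (C *ᵥ w) := by
      intro w
      rw [hxu, star_mulVec, conjTranspose_conjTranspose, ← dotProduct_mulVec]
    have hdot : star x ⬝ᵥ x' = star x ⬝ᵥ x := by
      rw [hdotw x', hdotw x, hCx', hCx]
    calc vnorm x ≤ vnorm x' := key_cs x x' hdot
      _ = vnorm (Cu⁻¹ *ᵥ y) := vnorm_cons_zero _
  have part1 : specNorm (pinv C) ≤ specNorm Cu⁻¹ := by
    unfold specNorm
    apply ContinuousLinearMap.opNorm_le_bound _ (norm_nonneg _)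
    intro Y
    set y : Fin (n+1) → ℂ := WithLp.equiv 2 (Fin (n+1) → ℂ) Y with hy
    have hY : Y = (WithLp.equiv 2 (Fin (n+1) → ℂ)).symm y := rfl
    have h1 : ‖(Matrix.toEuclideanLin (pinv C)).toContinuousLinearMap Y‖
        = vnorm (pinv C *ᵥ y) := by
      rw [vnorm_eq_norm, hY]
      simp
    have h2 : ‖Y‖ = vnorm y := by rw [vnorm_eq_norm, hY]
    rw [h1, h2]
    exact le_trans (hmin y) (by simpa [specNorm] using vnorm_mulVec_le Cu⁻¹ y)
  -- Part 2
  set M := specNorm Cu⁻¹ with hM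
  have hM0 : 0 ≤ M := specNorm_nonneg _
  set S := ∑ i, ‖(Cu⁻¹ *ᵥ c) i‖ ^ 2 with hS
  have hS0 : 0 ≤ S := Finset.sum_nonneg fun i _ => by positivity
  have hw : vnorm ((Fin.cons 1 (fun i => -((Cu⁻¹ *ᵥ c) i))) : Fin (n + 2) → ℂ)
      = Real.sqrt (1 + S) := by
    unfold vnorm
    rw [Fin.sum_univ_succ]
    simp [hS]
  have hq0' : ‖q0‖ * Real.sqrt (1 + S) = 1 := by
    rw [vnorm_smul, hw] at hq0
    exact hq0
  set N := vnorm (Cu⁻¹ *ᵥ Pi.single (Fin.last n) 1) with hN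
  have hN0 : 0 ≤ N := vnorm_nonneg _
  have het' : ‖et‖ * N = 1 := by
    rw [vnorm_smul] at het
    exact het
  have hsingle : vnorm (Pi.single (Fin.last n) (1:ℂ)) = 1 := by
    have h4 : ∀ i, ‖(Pi.single (Fin.last n) (1:ℂ) : Fin (n+1) → ℂ) i‖ ^ 2
        = if i = Fin.last n then 1 else 0 := by
      intro i
      rcases eq_or_ne i (Fin.last n) with h | h <;> simp [Pi.single_apply, h]
    unfold vnorm
    rw [Finset.sum_congr rfl fun i _ => h4 i, Finset.sum_ite_eq' _ _ _]
    simp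
  have hNM : N ≤ M := by
    have := vnorm_mulVec_le Cu⁻¹ (Pi.single (Fin.last n) 1)
    rwa [hsingle, mul_one] at this
  -- Frobenius-type bound
  have hcol : ∀ k : Fin (n+2), vnorm (Cu⁻¹ *ᵥ (fun i => C i k)) ^ 2
      ≤ M ^ 2 * ∑ i, ‖C i k‖ ^ 2 := by
    intro k
    have h5 := vnorm_mulVec_le Cu⁻¹ (fun i => C i k)
    calc vnorm (Cu⁻¹ *ᵥ (fun i => C i k)) ^ 2 ≤ (M * vnorm (fun i => C i k)) ^ 2 := by
          apply pow_le_pow_left₀ (vnorm_nonneg _) h5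
      _ = M ^ 2 * ∑ i, ‖C i k‖ ^ 2 := by rw [mul_pow, sq_vnorm]
  have hsum1 : ∀ j : Fin (n+1), vnorm (Cu⁻¹ *ᵥ (fun i => C i j.succ)) ^ 2 = 1 := by
    intro j
    have h6 : (Cu⁻¹ *ᵥ (fun i => C i j.succ))
        = fun k => (1 : Matrix (Fin (n+1)) (Fin (n+1)) ℂ) k j := by
      funext k
      have h7 : (Cu⁻¹ *ᵥ (fun i => C i j.succ)) k = (Cu⁻¹ * Cu) k j := by
        simp [hC, Matrix.mulVec, Matrix.mul_apply, dotProduct]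
      rw [h7, Matrix.nonsing_inv_mul _ hdetCu]
    rw [h6, sq_vnorm]
    have h8 : ∀ k, ‖(1 : Matrix (Fin (n+1)) (Fin (n+1)) ℂ) k j‖ ^ 2
        = if k = j then 1 else 0 := by
      intro k
      rcases eq_or_ne k j with h | h <;> simp [Matrix.one_apply, h]
    rw [Finset.sum_congr rfl fun k _ => h8 k, Finset.sum_ite_eq' _ _ _]
    simp
  have hkey : (1 : ℝ) + S ≤ M ^ 2 * (n + 1) := by
    have e1 : S + (n + 1 : ℝ) = ∑ k : Fin (n+2), vnorm (Cu⁻¹ *ᵥ (fun i => C i k)) ^ 2 := by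
      rw [Fin.sum_univ_succ]
      have h9 : (fun i => C i 0) = c := funext fun i => by simp [hC]
      rw [h9]
      simp only [hsum1]
      rw [sq_vnorm, ← hS]
      simp
    have e2 : ∑ k : Fin (n+2), vnorm (Cu⁻¹ *ᵥ (fun i => C i k)) ^ 2
        ≤ M ^ 2 * ∑ k, ∑ i, ‖C i k‖ ^ 2 := by
      rw [Finset.mul_sum]
      exact Finset.sum_le_sum fun k _ => hcol k
    have e3 : ∑ k : Fin (n+2), ∑ i, ‖C i k‖ ^ 2 ≤ (n + 1 : ℝ) := by
      rw [Finset.sum_comm]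
      exact hFrob
    nlinarith [sq_nonneg M]
  have hsqrt : Real.sqrt (1 + S) ≤ Real.sqrt (n + 1) * M := by
    have h10 : Real.sqrt (1 + S) ≤ Real.sqrt (M ^ 2 * (n + 1)) := Real.sqrt_le_sqrt hkey
    rwa [Real.sqrt_mul (sq_nonneg M), Real.sqrt_sq hM0, mul_comm M] at h10
  have hprod : (‖q0‖ * ‖et‖) * (Real.sqrt (1 + S) * N) = 1 := by
    calc (‖q0‖ * ‖et‖) * (Real.sqrt (1 + S) * N)
        = (‖q0‖ * Real.sqrt (1 + S)) * (‖et‖ * N) := by ring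
      _ = 1 := by rw [hq0', het', one_mul]
  have heq : 1 / ‖q0 * et‖ = Real.sqrt (1 + S) * N := by
    rw [show ‖q0 * et‖ = ‖q0‖ * ‖et‖ from norm_mul _ _]
    exact (eq_one_div_of_mul_eq_one_right hprod).symm
  refine ⟨part1, ?_⟩
  rw [heq]
  calc Real.sqrt (1 + S) * N ≤ (Real.sqrt (n + 1) * M) * M :=
        mul_le_mul hsqrt hNM hN0 (by positivity)
    _ = Real.sqrt (n + 1) * M ^ 2 := by ring
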